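/- Let a₁,…,a_k be positive integers with gcd(a₁,…,a_k)=1 and let μ ≥ 0 be an integer. Then s_μ(a₁,…,a_k) = (1/(μ+1))·Σ_{κ=0}^{μ} C(μ+1,κ) B_κ a₁^{κ−1} Σ_{i=1}^{a₁−1} m_i^{μ+1−κ} + (B_{μ+1}/(μ+1))·(a₁^{μ+1}−1). -/

import Mathlib

open Finset

/-- `n` is representable as a nonnegative integer combination of the `a i`. -/
def Representable {k : ℕ} (a : Fin k → ℕ) (n : ℕ) : Prop :=
  ∃ x : Fin k → ℕ, n = ∑ i, x i * a i

/-- The set of positive integers that are not representable. -/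
def NRset {k : ℕ} (a : Fin k → ℕ) : Set ℕ :=
  {n | 0 < n ∧ ¬ Representable a n}

section Aux

open PowerSeries

lemma telescope (p q : ℕ) (x : ℚ) :
    ((p:ℚ)+1) * ∑ s ∈ Finset.range q, (x + s)^p =
      (Polynomial.bernoulli (p+1)).eval (x + q) - (Polynomial.bernoulli (p+1)).eval x := by
  induction q with
  | zero => simp
  | succ q ih =>
    rw [Finset.sum_range_succ, mul_add, ih]
    have h := Polynomial.bernoulli_eval_one_add (p+1) (x + q)
    have hx : x + (↑(q+1):ℚ) = 1 + (x + q) := by push_cast; ring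
    rw [hx, h]
    push_cast
    ring

lemma rescale_pow_exp (a : ℕ) (ha0 : (a:ℚ) ≠ 0) (i : ℕ) :
    (rescale ((1:ℚ)/a) (exp ℚ))^i = rescale ((i:ℚ)/a) (exp ℚ) := by
  induction i with
  | zero => simp [rescale_zero]
  | succ i ih =>
    rw [pow_succ, ih, exp_mul_exp_eq_exp_add]
    congr 1
    push_cast
    field_simp

lemma key_mult (n a : ℕ) (ha : 0 < a) :
    ∑ i ∈ Finset.range a, (Polynomial.bernoulli n).eval ((i:ℚ)/a)
      = (a : ℚ) * _root_.bernoulli n / (a:ℚ)^n := by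
  have ha0 : (a:ℚ) ≠ 0 := Nat.cast_ne_zero.mpr ha.ne'
  set r : PowerSeries ℚ := rescale ((1:ℚ)/a) (exp ℚ) with hr
  have hexp : exp ℚ - 1 ≠ 0 := by
    intro h
    have := congrArg (PowerSeries.coeff 1) h
    simp [coeff_exp] at this
  have hrne : r - 1 ≠ 0 := by
    intro h
    have := congrArg (PowerSeries.coeff 1) h
    simp [hr, coeff_rescale, coeff_exp, ha0] at this
  have hgeom : (∑ i ∈ Finset.range a, rescale ((i:ℚ)/a) (exp ℚ)) * (r - 1) = exp ℚ - 1 := by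
    simp_rw [← rescale_pow_exp a ha0]
    rw [geom_sum_mul, rescale_pow_exp a ha0 a, div_self ha0, rescale_one, RingHom.id_apply]
  set S : PowerSeries ℚ := ∑ i ∈ Finset.range a,
      PowerSeries.mk fun p => Polynomial.aeval ((i:ℚ)/a) ((1 / (Nat.factorial p) : ℚ) • Polynomial.bernoulli p)
    with hSdef
  set T : PowerSeries ℚ := (a:ℚ) • rescale ((1:ℚ)/a) (bernoulliPowerSeries ℚ) with hTdef
  have hS : S * (exp ℚ - 1) * (r - 1) = PowerSeries.X * (exp ℚ - 1) := by
    rw [hSdef, Finset.sum_mul]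
    simp_rw [Polynomial.bernoulli_generating_function]
    rw [← Finset.mul_sum, mul_assoc, hgeom]
  have hX : (a:ℚ) • rescale ((1:ℚ)/a) (PowerSeries.X : PowerSeries ℚ) = PowerSeries.X := by
    ext k
    simp only [map_smul, coeff_rescale, PowerSeries.coeff_X, smul_eq_mul]
    rcases eq_or_ne k 1 with h | h
    · subst h; simp; field_simp
    · simp [h]
  have hT : T * (exp ℚ - 1) * (r - 1) = PowerSeries.X * (exp ℚ - 1) := by
    have h1 : rescale ((1:ℚ)/a) (bernoulliPowerSeries ℚ) * (r - 1)
        = rescale ((1:ℚ)/a) (PowerSeries.X) := by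
      rw [hr, ← map_one (rescale ((1:ℚ)/a)), ← map_sub, ← map_mul,
        bernoulliPowerSeries_mul_exp_sub_one]
    rw [hTdef, smul_mul_assoc, smul_mul_assoc, mul_right_comm, ← smul_mul_assoc, h1, hX]
  have hST : S = T := mul_right_cancel₀ hexp (mul_right_cancel₀ hrne (hS.trans hT.symm))
  have hc := congrArg (PowerSeries.coeff n) hST
  rw [hSdef, hTdef, map_sum] at hc
  have haev : ∀ x : ℚ, ∀ p : Polynomial ℚ, Polynomial.aeval x p = p.eval x := by
    intro x p; rw [Polynomial.aeval_def, Polynomial.eval]; rfl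
  simp only [PowerSeries.coeff_mk, map_smul, coeff_rescale, bernoulliPowerSeries,
    smul_eq_mul, haev, Polynomial.eval_smul] at hc
  rw [← Finset.mul_sum] at hc
  have hfac : ((Nat.factorial n) : ℚ) ≠ 0 := by exact_mod_cast Nat.factorial_ne_zero n
  field_simp at hc
  rw [eq_div_iff (pow_ne_zero n ha0), hc, Algebra.algebraMap_self, RingHom.id_apply, div_pow, one_pow]
  field_simp

lemma rep_add_mul {k : ℕ} (a : Fin (k+1) → ℕ) {n : ℕ} (h : Representable a n) (t : ℕ) :
    Representable a (n + t * a 0) := by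
  obtain ⟨x, rfl⟩ := h
  refine ⟨Function.update x 0 (x 0 + t), ?_⟩
  rw [Fin.sum_univ_succ, Fin.sum_univ_succ]
  simp only [Function.update_self, Function.update_of_ne (Fin.succ_ne_zero _)]
  ring

lemma rep_mul {k : ℕ} (a : Fin (k+1) → ℕ) (t : ℕ) : Representable a (t * a 0) := by
  have h0 : Representable a 0 := ⟨fun _ => 0, by simp⟩
  simpa using rep_add_mul a h0 t

lemma NRset_eq {k : ℕ} (a : Fin (k+1) → ℕ) (ha0 : 0 < a 0)
    (m : ℕ → ℕ)
    (hm : ∀ i ∈ Finset.Icc 1 (a 0 - 1),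
      IsLeast {n : ℕ | 0 < n ∧ Representable a n ∧ n % (a 0) = i} (m i)) :
    NRset a = ↑((Finset.Icc 1 (a 0 - 1)).biUnion
      (fun i => (Finset.range (m i / a 0)).image (fun s => i + s * a 0))) := by
  ext n
  simp only [Finset.coe_biUnion, Set.mem_iUnion, Finset.mem_coe, Finset.mem_image,
    Finset.mem_range, Finset.mem_Icc, NRset, Set.mem_setOf_eq]
  constructor
  · rintro ⟨hn0, hnr⟩
    set i := n % a 0 with hi
    have hia : i < a 0 := Nat.mod_lt _ ha0
    have hdm : n = i + n / a 0 * a 0 := by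
      conv_lhs => rw [← Nat.div_add_mod n (a 0)]
      rw [← hi]; ring
    have hine : i ≠ 0 := fun h => hnr (by rw [hdm, h, zero_add]; exact rep_mul a _)
    have hiIcc : 1 ≤ i ∧ i ≤ a 0 - 1 := by omega
    obtain ⟨⟨hmi0, hmirep, hmimod⟩, hm2⟩ := hm i (Finset.mem_Icc.mpr hiIcc)
    have hmieq : m i = i + m i / a 0 * a 0 := by
      conv_lhs => rw [← Nat.div_add_mod (m i) (a 0)]
      rw [hmimod]; ring
    refine ⟨i, hiIcc, n / a 0, ?_, hdm.symm⟩
    by_contra hs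
    push_neg at hs
    obtain ⟨d, hd⟩ := Nat.exists_eq_add_of_le hs
    apply hnr
    have hneq : n = m i + d * a 0 :=
      calc n = i + (m i / a 0 + d) * a 0 := by rw [hdm, hd]
        _ = (i + m i / a 0 * a 0) + d * a 0 := by ring
        _ = m i + d * a 0 := by rw [← hmieq]
    rw [hneq]
    exact rep_add_mul a hmirep d
  · rintro ⟨i, hiIcc, s, hs, rfl⟩
    have hi1 : 1 ≤ i := hiIcc.1
    have hilt : i < a 0 := by omega
    refine ⟨by omega, fun hrep => ?_⟩
    obtain ⟨⟨hmi0, hmirep, hmimod⟩, hm2⟩ := hm i (Finset.mem_Icc.mpr hiIcc)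
    have hmod : (i + s * a 0) % a 0 = i := by
      rw [Nat.add_mul_mod_self_right, Nat.mod_eq_of_lt hilt]
    have hle : m i ≤ i + s * a 0 := hm2 ⟨by omega, hrep, hmod⟩
    have hmieq : m i = i + m i / a 0 * a 0 := by
      conv_lhs => rw [← Nat.div_add_mod (m i) (a 0)]
      rw [hmimod]; ring
    have h1 : (s+1) * a 0 ≤ (m i / a 0) * a 0 := Nat.mul_le_mul_right _ hs
    have h2 : (s+1) * a 0 = s * a 0 + a 0 := by ring
    omega

lemma analytic (μ A : ℕ) (hA : 0 < A) (M : ℕ → ℕ) (q : ℕ → ℕ)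
    (hMq : ∀ i ∈ Finset.Icc 1 (A-1), M i = i + q i * A) :
    ∑ i ∈ Finset.Icc 1 (A-1), ∑ s ∈ Finset.range (q i), ((i + s * A : ℕ) : ℚ)^μ =
      (1/((μ:ℚ)+1)) * ∑ κ ∈ Finset.range (μ+1),
          ((μ+1).choose κ : ℚ) * bernoulli κ * (A:ℚ)^((κ:ℤ)-1) *
            ∑ i ∈ Finset.Icc 1 (A-1), (M i : ℚ)^(μ+1-κ)
      + bernoulli (μ+1) / ((μ:ℚ)+1) * ((A:ℚ)^(μ+1) - 1) := by
  have hA0 : (A:ℚ) ≠ 0 := Nat.cast_ne_zero.mpr hA.ne'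
  have hμ : ((μ:ℚ)+1) ≠ 0 := by positivity
  set B : Polynomial ℚ := Polynomial.bernoulli (μ+1) with hB
  -- Step 1: rewrite inner sums via Bernoulli polynomials
  have step1 : ∀ i ∈ Finset.Icc 1 (A-1),
      ∑ s ∈ Finset.range (q i), ((i + s * A : ℕ) : ℚ)^μ
        = ((A:ℚ)^μ * (B.eval ((M i:ℚ)/A) - B.eval ((i:ℚ)/A))) / ((μ:ℚ)+1) := by
    intro i hi
    have hcast : ∀ s:ℕ, ((i + s*A : ℕ):ℚ)^μ = (A:ℚ)^μ * ((i:ℚ)/A + s)^μ := by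
      intro s
      push_cast
      rw [← mul_pow]
      congr 1
      field_simp
    rw [Finset.sum_congr rfl fun s _ => hcast s, ← Finset.mul_sum]
    have ht := telescope μ (q i) ((i:ℚ)/A)
    have h3 : (i:ℚ)/A + (q i:ℚ) = (M i:ℚ)/A := by
      rw [hMq i hi]; push_cast; field_simp
    rw [h3] at ht
    rw [eq_div_iff hμ]
    rw [hB]
    linear_combination (A:ℚ)^μ * ht
  rw [Finset.sum_congr rfl step1, ← Finset.sum_div]
  simp_rw [mul_sub]
  rw [Finset.sum_sub_distrib]
  -- Step 2: sum of B(i/A) over Icc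
  have hrange : Finset.range A = insert 0 (Finset.Icc 1 (A-1)) := by
    ext x
    simp only [Finset.mem_range, Finset.mem_insert, Finset.mem_Icc]
    omega
  have hIccsum : ∑ i ∈ Finset.Icc 1 (A-1), B.eval ((i:ℚ)/A)
      = (A:ℚ) * _root_.bernoulli (μ+1) / (A:ℚ)^(μ+1) - _root_.bernoulli (μ+1) := by
    have h1 := key_mult (μ+1) A hA
    rw [hrange, Finset.sum_insert (by simp)] at h1
    rw [← hB] at h1
    simp only [Nat.cast_zero, zero_div, hB, Polynomial.bernoulli_eval_zero] at h1 ⊢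
    linarith
  have hsum2 : ∑ i ∈ Finset.Icc 1 (A-1), (A:ℚ)^μ * B.eval ((i:ℚ)/A)
      = (A:ℚ)^μ * ((A:ℚ) * _root_.bernoulli (μ+1) / (A:ℚ)^(μ+1) - _root_.bernoulli (μ+1)) := by
    rw [← Finset.mul_sum, hIccsum]
  -- Step 3: binomial expansion of A^μ B(x/A)
  have hexpand : ∀ x:ℚ, (A:ℚ)^μ * B.eval (x/A)
      = ∑ κ ∈ Finset.range (μ+2), ((μ+1).choose κ : ℚ) * bernoulli κ *
          (A:ℚ)^((κ:ℤ)-1) * x^(μ+1-κ) := by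
    intro x
    rw [hB, Polynomial.bernoulli, Polynomial.eval_finset_sum, Finset.mul_sum]
    apply Finset.sum_congr rfl
    intro κ hκ
    have hκle : κ ≤ μ+1 := by
      have := Finset.mem_range.mp hκ; omega
    rw [Polynomial.eval_monomial, div_pow]
    have hz : (A:ℚ)^((κ:ℤ)-1) = (A:ℚ)^μ / (A:ℚ)^(μ+1-κ) := by
      rw [show ((κ:ℤ)-1) = (μ:ℤ) - ((μ+1-κ:ℕ):ℤ) by omega, zpow_sub₀ hA0,
        zpow_natCast, zpow_natCast]
    rw [hz]
    ring
  -- Step 4: sum over i of the expansion, splitting off κ = μ+1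
  have hsum1 : ∑ i ∈ Finset.Icc 1 (A-1), (A:ℚ)^μ * B.eval ((M i:ℚ)/A)
      = (∑ κ ∈ Finset.range (μ+1), ((μ+1).choose κ : ℚ) * bernoulli κ *
          (A:ℚ)^((κ:ℤ)-1) * ∑ i ∈ Finset.Icc 1 (A-1), (M i:ℚ)^(μ+1-κ))
        + ((A:ℚ)-1) * _root_.bernoulli (μ+1) * (A:ℚ)^μ := by
    calc ∑ i ∈ Finset.Icc 1 (A-1), (A:ℚ)^μ * B.eval ((M i:ℚ)/A)
        = ∑ i ∈ Finset.Icc 1 (A-1), ∑ κ ∈ Finset.range (μ+2),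
            ((μ+1).choose κ : ℚ) * bernoulli κ * (A:ℚ)^((κ:ℤ)-1) * (M i:ℚ)^(μ+1-κ) :=
          Finset.sum_congr rfl fun i _ => hexpand (M i)
      _ = ∑ κ ∈ Finset.range (μ+2), ∑ i ∈ Finset.Icc 1 (A-1),
            ((μ+1).choose κ : ℚ) * bernoulli κ * (A:ℚ)^((κ:ℤ)-1) * (M i:ℚ)^(μ+1-κ) :=
          Finset.sum_comm
      _ = (∑ κ ∈ Finset.range (μ+1), ∑ i ∈ Finset.Icc 1 (A-1),
            ((μ+1).choose κ : ℚ) * bernoulli κ * (A:ℚ)^((κ:ℤ)-1) * (M i:ℚ)^(μ+1-κ))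
          + ∑ i ∈ Finset.Icc 1 (A-1),
            ((μ+1).choose (μ+1) : ℚ) * bernoulli (μ+1) * (A:ℚ)^(((μ+1:ℕ):ℤ)-1)
              * (M i:ℚ)^(μ+1-(μ+1)) := Finset.sum_range_succ _ _
      _ = _ := by
          congr 1
          · exact Finset.sum_congr rfl fun κ _ => (Finset.mul_sum _ _ _).symm
          · simp only [Nat.choose_self, Nat.cast_one, one_mul, Nat.sub_self, pow_zero, mul_one]
            rw [Finset.sum_const, show (((μ+1:ℕ):ℤ)-1) = (μ:ℤ) by omega, zpow_natCast,
              Nat.card_Icc, nsmul_eq_mul]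
            have : ((A - 1 + 1 - 1 : ℕ):ℚ) = (A:ℚ)-1 := by
              have : A - 1 + 1 - 1 = A - 1 := by omega
              rw [this, Nat.cast_sub hA, Nat.cast_one]
            rw [this]
            ring
  rw [hsum1, hsum2]
  set E := ∑ κ ∈ Finset.range (μ+1), ((μ+1).choose κ : ℚ) * bernoulli κ *
      (A:ℚ)^((κ:ℤ)-1) * ∑ i ∈ Finset.Icc 1 (A-1), (M i:ℚ)^(μ+1-κ) with hE
  set b := _root_.bernoulli (μ+1) with hb
  have hpow : (A:ℚ)^(μ+1) ≠ 0 := pow_ne_zero _ hA0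
  field_simp
  ring

end Aux

/-- Sylvester power sum:
`s_μ = (1/(μ+1))·Σ_{κ=0}^{μ} C(μ+1,κ) B_κ a₁^{κ−1} Σ_{i=1}^{a₁−1} m_i^{μ+1−κ}
      + (B_{μ+1}/(μ+1))·(a₁^{μ+1}−1)`. -/
theorem stmt3 {k : ℕ} (a : Fin (k + 1) → ℕ)
    (ha : ∀ i, 0 < a i)
    (hgcd : Finset.univ.gcd a = 1)
    (m : ℕ → ℕ)
    (hm : ∀ i ∈ Finset.Icc 1 (a 0 - 1),
      IsLeast {n : ℕ | 0 < n ∧ Representable a n ∧ n % (a 0) = i} (m i))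
    (μ : ℕ) :
    ∑ᶠ n ∈ NRset a, (n : ℚ) ^ μ =
      (1 / ((μ : ℚ) + 1)) * ∑ κ ∈ Finset.range (μ + 1),
          ((μ + 1).choose κ : ℚ) * bernoulli κ * (a 0 : ℚ) ^ ((κ : ℤ) - 1) *
            ∑ i ∈ Finset.Icc 1 (a 0 - 1), (m i : ℚ) ^ (μ + 1 - κ)
        + bernoulli (μ + 1) / ((μ : ℚ) + 1) * ((a 0 : ℚ) ^ (μ + 1) - 1) := by
  have hA : 0 < a 0 := ha 0
  rw [NRset_eq a hA m hm, finsum_mem_coe_finset]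
  have hdisj : (↑(Finset.Icc 1 (a 0 - 1)) : Set ℕ).PairwiseDisjoint
      (fun i => (Finset.range (m i / a 0)).image (fun s => i + s * a 0)) := by
    intro i hi j hj hij
    simp only [Finset.coe_Icc, Set.mem_Icc] at hi hj
    simp only [Function.onFun]
    rw [Finset.disjoint_left]
    rintro x hxi hxj
    simp only [Finset.mem_image, Finset.mem_range] at hxi hxj
    obtain ⟨s, -, rfl⟩ := hxi
    obtain ⟨t, -, hxe⟩ := hxj
    apply hij
    have h1 : (i + s * a 0) % a 0 = i := by
      rw [Nat.add_mul_mod_self_right, Nat.mod_eq_of_lt (by omega)]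
    have h2 : (j + t * a 0) % a 0 = j := by
      rw [Nat.add_mul_mod_self_right, Nat.mod_eq_of_lt (by omega)]
    rw [← h1, ← hxe]
    exact h2
  rw [Finset.sum_biUnion hdisj]
  have himg : ∀ i ∈ Finset.Icc 1 (a 0 - 1),
      ∑ n ∈ (Finset.range (m i / a 0)).image (fun s => i + s * a 0), (n:ℚ)^μ
        = ∑ s ∈ Finset.range (m i / a 0), ((i + s * a 0 : ℕ):ℚ)^μ := by
    intro i hi
    apply Finset.sum_image
    intro s _ t _ h
    have h2 : s * a 0 = t * a 0 := by simp only at h; omega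
    exact Nat.eq_of_mul_eq_mul_right hA h2
  rw [Finset.sum_congr rfl himg]
  have hMq : ∀ i ∈ Finset.Icc 1 (a 0 - 1), m i = i + (m i / a 0) * a 0 := by
    intro i hi
    obtain ⟨⟨hmi0, hmirep, hmimod⟩, -⟩ := hm i hi
    conv_lhs => rw [← Nat.div_add_mod (m i) (a 0)]
    rw [hmimod]; ring
  exact analytic μ (a 0) hA m (fun i => m i / a 0) hMq
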